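/- Let B be a Banach space and Φ a frame for B with associated admissible Banach sequence space 𝔅 (so A‖x‖ ≤ ‖(φ_λ(x))_λ‖_𝔅 ≤ B‖x‖ and a continuous left inverse R exists). If the phaseless measurement map A_Φ : B/~ → 𝔅, x ↦ (|φ_λ(x)|)_λ is injective, then its inverse A_Φ^{-1} is continuous on the range of A_Φ. -/

import Mathlib

open scoped BigOperators

/-- An admissible Banach space `E` of `K`-valued families over `Λ`, given by a linear
embedding into `Λ → K`, which is solid, norm-determined by absolute values, contains
indicators of compact sets, and in which compactly supported elements are dense. -/
structure AdmissibleEmbedding (K : Type) [RCLike K] (Λ : Type) [TopologicalSpace Λ]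
    (E : Type) [NormedAddCommGroup E] [NormedSpace K E] where
  emb : E →ₗ[K] (Λ → K)
  inj : Function.Injective emb
  solid_exists : ∀ (w : Λ → K) (z : E), (∀ l, ‖w l‖ ≤ ‖emb z l‖) →
    ∃ w' : E, emb w' = w ∧ ‖w'‖ ≤ ‖z‖
  norm_abs : ∀ w w' : E, (∀ l, ‖emb w l‖ = ‖emb w' l‖) → ‖w‖ = ‖w'‖
  indicator_mem : ∀ Λ' : Set Λ, IsCompact Λ' → ∃ e : E, emb e = Λ'.indicator (fun _ => (1 : K))
  dense_compact : Dense {e : E | ∃ Λ' : Set Λ, IsCompact Λ' ∧ ∀ l, l ∉ Λ' → emb e l = 0}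

variable {K Λ E : Type} [RCLike K] [TopologicalSpace Λ]
    [NormedAddCommGroup E] [NormedSpace K E]

/-- solidity with a sum of two dominators -/
lemma solid_sum (adm : AdmissibleEmbedding K Λ E) (w : Λ → K) (z₁ z₂ : E)
    (h : ∀ l, ‖w l‖ ≤ ‖adm.emb z₁ l‖ + ‖adm.emb z₂ l‖) :
    ∃ w' : E, adm.emb w' = w ∧ ‖w'‖ ≤ ‖z₁‖ + ‖z₂‖ := by
  set f : Λ → ℝ := fun l => ‖adm.emb z₁ l‖ with hf
  set g : Λ → ℝ := fun l => ‖adm.emb z₂ l‖ with hg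
  set w₁ : Λ → K := fun l => if f l + g l = 0 then 0 else ((f l / (f l + g l) : ℝ) : K) * w l
  set w₂ : Λ → K := fun l => if f l + g l = 0 then 0 else ((g l / (f l + g l) : ℝ) : K) * w l
  have hfg : ∀ l, 0 ≤ f l + g l := fun l => by positivity
  have hw0 : ∀ l, f l + g l = 0 → w l = 0 := by
    intro l hl
    have := h l; rw [hl] at this
    exact norm_le_zero_iff.mp this
  have h1 : ∀ l, ‖w₁ l‖ ≤ ‖adm.emb z₁ l‖ := by
    intro l
    by_cases hl : f l + g l = 0
    · simp [w₁, hl]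
    · have hpos : 0 < f l + g l := lt_of_le_of_ne (hfg l) (Ne.symm hl)
      have habs : |f l / (f l + g l)| = f l / (f l + g l) := by
        rw [abs_of_nonneg]; positivity
      simp only [w₁, if_neg hl, norm_mul, RCLike.norm_ofReal, habs]
      calc f l / (f l + g l) * ‖w l‖ ≤ f l / (f l + g l) * (f l + g l) := by
            apply mul_le_mul_of_nonneg_left (h l); positivity
        _ = f l := by field_simp
  have h2 : ∀ l, ‖w₂ l‖ ≤ ‖adm.emb z₂ l‖ := by
    intro l
    by_cases hl : f l + g l = 0
    · simp [w₂, hl]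
    · have hpos : 0 < f l + g l := lt_of_le_of_ne (hfg l) (Ne.symm hl)
      have habs : |g l / (f l + g l)| = g l / (f l + g l) := by
        rw [abs_of_nonneg]; positivity
      simp only [w₂, if_neg hl, norm_mul, RCLike.norm_ofReal, habs]
      calc g l / (f l + g l) * ‖w l‖ ≤ g l / (f l + g l) * (f l + g l) := by
            apply mul_le_mul_of_nonneg_left (h l); positivity
        _ = g l := by field_simp
  obtain ⟨w₁', hw₁, hn₁⟩ := adm.solid_exists w₁ z₁ h1
  obtain ⟨w₂', hw₂, hn₂⟩ := adm.solid_exists w₂ z₂ h2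
  refine ⟨w₁' + w₂', ?_, le_trans (norm_add_le _ _) (add_le_add hn₁ hn₂)⟩
  rw [map_add, hw₁, hw₂]
  funext l
  by_cases hl : f l + g l = 0
  · simp [w₁, w₂, hl, hw0 l hl]
  · have hpos : 0 < f l + g l := lt_of_le_of_ne (hfg l) (Ne.symm hl)
    simp only [Pi.add_apply, w₁, w₂, if_neg hl]
    rw [← add_mul, ← RCLike.ofReal_add]
    have : f l / (f l + g l) + g l / (f l + g l) = 1 := by field_simp
    rw [this]; simp

/-- point evaluations are bounded -/
lemma eval_bound (adm : AdmissibleEmbedding K Λ E) (l : Λ) :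
    ∃ c : ℝ, 0 < c ∧ ∀ e : E, ‖adm.emb e l‖ ≤ c * ‖e‖ := by
  obtain ⟨el, hel⟩ := adm.indicator_mem {l} isCompact_singleton
  have hel1 : adm.emb el l = 1 := by rw [hel]; simp
  have helne : el ≠ 0 := by
    intro h0
    rw [h0, map_zero] at hel1; simp at hel1
  have hpos : 0 < ‖el‖ := norm_pos_iff.mpr helne
  refine ⟨‖el‖⁻¹, by positivity, fun e => ?_⟩
  have hdom : ∀ l', ‖adm.emb (adm.emb e l • el) l'‖ ≤ ‖adm.emb e l'‖ := by
    intro l'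
    rw [map_smul]
    by_cases hl' : l' = l
    · subst hl'; simp [hel1]
    · have : adm.emb el l' = 0 := by
        rw [hel]; simp [Set.indicator_of_notMem, hl']
      simp [this]
  obtain ⟨w', hw', hn⟩ := adm.solid_exists (adm.emb (adm.emb e l • el)) e hdom
  have : w' = adm.emb e l • el := adm.inj hw'
  rw [this] at hn
  rw [norm_smul] at hn
  rw [inv_mul_eq_div, le_div_iff₀ hpos]
  linarith [hn]

/-- A Banach frame `Φ = (φ_λ)` for `B` with associated admissible space `E`:
frame inequalities, a continuous reconstruction operator, and distinguished elements of `E`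
representing the coefficient family, the phaseless coefficient family, and restricted
coefficient families. -/
structure BanachFramePR (K : Type) [RCLike K] (Λ : Type) [TopologicalSpace Λ]
    (B : Type) [NormedAddCommGroup B] [NormedSpace K B]
    (E : Type) [NormedAddCommGroup E] [NormedSpace K E]
    (adm : AdmissibleEmbedding K Λ E) where
  Φ : Λ → (B →L[K] K)
  contΦ : Continuous Φ
  coeff : B → E
  coeff_spec : ∀ x l, adm.emb (coeff x) l = Φ l x
  absCoeff : B → E
  absCoeff_spec : ∀ x l, adm.emb (absCoeff x) l = (‖Φ l x‖ : K)
  restrict : Set Λ → B → E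
  restrict_spec : ∀ (S : Set Λ) x l, adm.emb (restrict S x) l = S.indicator (fun l => Φ l x) l
  A : ℝ
  C : ℝ
  hA : 0 < A
  hAC : A ≤ C
  lower : ∀ x, A * ‖x‖ ≤ ‖coeff x‖
  upper : ∀ x, ‖coeff x‖ ≤ C * ‖x‖
  recon : E → B
  recon_cont : Continuous recon
  recon_left : ∀ x, recon (coeff x) = x

/-- The quotient distance `d(x,y) = inf_{|τ|=1} ‖x - τ • y‖`. -/
noncomputable def phaseDist (K : Type) [RCLike K] {B : Type} [NormedAddCommGroup B]
    [NormedSpace K B] (x y : B) : ℝ :=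
  sInf {r : ℝ | ∃ τ : K, ‖τ‖ = 1 ∧ r = ‖x - τ • y‖}

variable {B : Type} [NormedAddCommGroup B] [NormedSpace K B]
variable {adm : AdmissibleEmbedding K Λ E} (F : BanachFramePR K Λ B E adm)

lemma abs_diff_eval (x y : B) (l : Λ) :
    ‖adm.emb (F.absCoeff y - F.absCoeff x) l‖ = |‖F.Φ l y‖ - ‖F.Φ l x‖| := by
  rw [map_sub, Pi.sub_apply, F.absCoeff_spec, F.absCoeff_spec, ← RCLike.ofReal_sub,
    RCLike.norm_ofReal]

lemma absCoeff_norm (y : B) : ‖F.absCoeff y‖ = ‖F.coeff y‖ := by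
  apply adm.norm_abs
  intro l
  rw [F.absCoeff_spec, F.coeff_spec, RCLike.norm_ofReal, abs_norm]

lemma coeff_decomp (S : Set Λ) (y : B) :
    F.coeff y = F.restrict S y + F.restrict Sᶜ y := by
  apply adm.inj
  rw [map_add]
  funext l
  rw [Pi.add_apply, F.restrict_spec, F.restrict_spec, F.coeff_spec]
  have := congrFun (Set.indicator_self_add_compl S (fun l => F.Φ l y)) l
  simpa using this.symm

lemma restrict_sup_bound (S : Set Λ) (eS : E)
    (heS : adm.emb eS = S.indicator (fun _ => (1 : K))) (M : ℝ) (hM : 0 ≤ M)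
    (y y' : B) (h : ∀ l ∈ S, ‖F.Φ l y - F.Φ l y'‖ ≤ M) :
    ‖F.restrict S y - F.restrict S y'‖ ≤ M * ‖eS‖ := by
  have hdom : ∀ l, ‖adm.emb (F.restrict S y - F.restrict S y') l‖ ≤
      ‖adm.emb ((M : K) • eS) l‖ := by
    intro l
    rw [map_sub, Pi.sub_apply, F.restrict_spec, F.restrict_spec, map_smul, Pi.smul_apply,
      norm_smul, heS]
    by_cases hl : l ∈ S
    · rw [Set.indicator_of_mem hl, Set.indicator_of_mem hl, Set.indicator_of_mem hl]
      simp only [norm_one, mul_one, RCLike.norm_ofReal, abs_of_nonneg hM]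
      exact h l hl
    · rw [Set.indicator_of_notMem hl, Set.indicator_of_notMem hl, Set.indicator_of_notMem hl]
      simp
  obtain ⟨w', hw', hn⟩ := adm.solid_exists _ ((M : K) • eS) hdom
  have : w' = F.restrict S y - F.restrict S y' := adm.inj hw'
  rw [this] at hn
  calc ‖F.restrict S y - F.restrict S y'‖ ≤ ‖(M : K) • eS‖ := hn
    _ = M * ‖eS‖ := by rw [norm_smul, RCLike.norm_ofReal, abs_of_nonneg hM]

lemma tail_x (S : Set Λ) (e : E) (he : ∀ l, l ∉ S → adm.emb e l = 0) (x : B) :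
    ‖F.restrict Sᶜ x‖ ≤ ‖F.coeff x - e‖ := by
  have hdom : ∀ l, ‖adm.emb (F.restrict Sᶜ x) l‖ ≤ ‖adm.emb (F.coeff x - e) l‖ := by
    intro l
    rw [F.restrict_spec, map_sub, Pi.sub_apply, F.coeff_spec]
    by_cases hl : l ∈ S
    · rw [Set.indicator_of_notMem (by simpa using hl)]
      simp
    · rw [Set.indicator_of_mem (by simpa using hl), he l hl, sub_zero]
  obtain ⟨w', hw', hn⟩ := adm.solid_exists _ (F.coeff x - e) hdom
  rwa [adm.inj hw'] at hn

lemma tail_y (S : Set Λ) (x y : B) :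
    ‖F.restrict Sᶜ y‖ ≤ ‖F.restrict Sᶜ x‖ + ‖F.absCoeff y - F.absCoeff x‖ := by
  have hdom : ∀ l, ‖adm.emb (F.restrict Sᶜ y) l‖ ≤
      ‖adm.emb (F.restrict Sᶜ x) l‖ + ‖adm.emb (F.absCoeff y - F.absCoeff x) l‖ := by
    intro l
    rw [F.restrict_spec, F.restrict_spec, abs_diff_eval]
    by_cases hl : l ∈ Sᶜ
    · rw [Set.indicator_of_mem hl, Set.indicator_of_mem hl]
      have : ‖F.Φ l y‖ - ‖F.Φ l x‖ ≤ |‖F.Φ l y‖ - ‖F.Φ l x‖| := le_abs_self _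
      linarith
    · rw [Set.indicator_of_notMem hl, Set.indicator_of_notMem hl]
      simp [abs_nonneg]
  obtain ⟨w', hw', hn⟩ := solid_sum adm _ _ _ hdom
  rwa [adm.inj hw'] at hn

lemma phaseDist_le (x y : B) (τ : K) (hτ : ‖τ‖ = 1) :
    phaseDist K x y ≤ ‖x - τ • y‖ := by
  apply csInf_le
  · refine ⟨0, ?_⟩
    rintro r ⟨σ, hσ, rfl⟩
    positivity
  · exact ⟨τ, hτ, rfl⟩

/-- Weak stability: if the phaseless measurement map of a Banach frame is injective up
to a unimodular scalar, then its inverse is continuous on its range. -/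
theorem stmt_4 {K Λ B E : Type} [RCLike K] [TopologicalSpace Λ] [SigmaCompactSpace Λ]
    [NormedAddCommGroup B] [NormedSpace K B] [CompleteSpace B]
    [NormedAddCommGroup E] [NormedSpace K E] [CompleteSpace E]
    (adm : AdmissibleEmbedding K Λ E) (F : BanachFramePR K Λ B E adm)
    (hinj : ∀ x y : B, (∀ l, ‖F.Φ l x‖ = ‖F.Φ l y‖) → ∃ τ : K, ‖τ‖ = 1 ∧ x = τ • y) :
    ∀ x : B, ∀ ε : ℝ, 0 < ε → ∃ δ : ℝ, 0 < δ ∧ ∀ y : B,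
      ‖F.absCoeff y - F.absCoeff x‖ < δ → phaseDist K y x < ε := by
  intro x ε hε
  by_contra hcon
  push_neg at hcon
  have hseq : ∀ n : ℕ, ∃ z : B,
      ‖F.absCoeff z - F.absCoeff x‖ < 1 / (n + 1) ∧ ε ≤ phaseDist K z x := by
    intro n
    obtain ⟨z, hz1, hz2⟩ := hcon (1 / (n + 1)) (by positivity)
    exact ⟨z, hz1, hz2⟩
  choose y hy1 hy2 using hseq
  -- the deviation sequence
  set d : ℕ → E := fun n => F.absCoeff (y n) - F.absCoeff x with hd
  have hdlim : Filter.Tendsto (fun n => ‖d n‖) Filter.atTop (nhds 0) := by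
    apply squeeze_zero (fun n => norm_nonneg _) (fun n => (hy1 n).le)
    exact tendsto_one_div_add_atTop_nhds_zero_nat
  have hd1 : ∀ n, ‖d n‖ ≤ 1 := by
    intro n
    refine (hy1 n).le.trans ?_
    rw [div_le_one (by positivity)]
    have : (0:ℝ) ≤ n := Nat.cast_nonneg n
    linarith
  -- uniform bound on ‖y n‖
  set M : ℝ := (‖F.absCoeff x‖ + 1) / F.A with hMdef
  have hM0 : 0 ≤ M := by
    apply div_nonneg _ F.hA.le
    positivity
  have hyM : ∀ n, ‖y n‖ ≤ M := by
    intro n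
    rw [hMdef, le_div_iff₀ F.hA, mul_comm]
    calc F.A * ‖y n‖ ≤ ‖F.coeff (y n)‖ := F.lower _
      _ = ‖F.absCoeff (y n)‖ := (absCoeff_norm F _).symm
      _ = ‖F.absCoeff x + d n‖ := by simp [hd]
      _ ≤ ‖F.absCoeff x‖ + ‖d n‖ := norm_add_le _ _
      _ ≤ ‖F.absCoeff x‖ + 1 := by linarith [hd1 n]
  -- total boundedness of the coefficient sequence
  have htb : TotallyBounded (Set.range fun n => F.coeff (y n)) := by
    rw [Metric.totallyBounded_iff]
    intro ε' hε'
    set η : ℝ := ε' / 8 with hηdef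
    have hη : 0 < η := by positivity
    -- compactly supported approximation of coeff x
    obtain ⟨e, ⟨S, hScomp, hSsupp⟩, hdist⟩ := adm.dense_compact.exists_dist_lt (F.coeff x) hη
    obtain ⟨eS, heS⟩ := adm.indicator_mem S hScomp
    have htailx : ‖F.restrict Sᶜ x‖ < η := by
      refine lt_of_le_of_lt (tail_x F S e hSsupp x) ?_
      rwa [← dist_eq_norm]
    obtain ⟨N, hN⟩ := exists_nat_one_div_lt hη
    have hdN : ∀ n, N ≤ n → ‖d n‖ < η := by
      intro n hn
      refine lt_of_lt_of_le (hy1 n) (le_trans ?_ hN.le)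
      apply one_div_le_one_div_of_le (by positivity)
      have : (N:ℝ) ≤ n := Nat.cast_le.mpr hn
      linarith
    have htaily : ∀ n, N ≤ n → ‖F.restrict Sᶜ (y n)‖ < 2 * η := by
      intro n hn
      calc ‖F.restrict Sᶜ (y n)‖ ≤ ‖F.restrict Sᶜ x‖ + ‖d n‖ := tail_y F S x (y n)
        _ < η + η := add_lt_add htailx (hdN n hn)
        _ = 2 * η := by ring
    set η' : ℝ := ε' / (8 * (‖eS‖ + 1)) with hη'def
    have hη' : 0 < η' := by positivity
    set θ : ℝ := η' / (2 * M + 2) with hθdef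
    have hθ : 0 < θ := by positivity
    -- finite subcover of S by sets where Φ varies little
    set U : Λ → Set Λ := fun l => {l' | ‖F.Φ l' - F.Φ l‖ < θ} with hU
    have hUopen : ∀ l, IsOpen (U l) := by
      intro l
      have : U l = (fun l' => F.Φ l') ⁻¹' (Metric.ball (F.Φ l) θ) := by
        ext l'; simp [hU, Metric.mem_ball, dist_eq_norm]
      rw [this]
      exact Metric.isOpen_ball.preimage F.contΦ
    obtain ⟨t, _, hsub⟩ := hScomp.elim_nhds_subcover U (fun l _ =>
      (hUopen l).mem_nhds (by simp [hU, hθ]))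
    -- the finite-dimensional projection
    set P : ℕ → (↥t → K) := fun n i => F.Φ i (y n) with hP
    have hPtb : TotallyBounded (Set.range P) := by
      set r : ℝ := (t.sup fun l => ‖F.Φ l‖₊ : NNReal) * M with hrdef
      refine TotallyBounded.subset ?_ (isCompact_closedBall 0 r).totallyBounded
      · rintro _ ⟨n, rfl⟩
        rw [Metric.mem_closedBall, dist_zero_right]
        rw [pi_norm_le_iff_of_nonneg (by positivity)]
        intro i
        calc ‖F.Φ i (y n)‖ ≤ ‖F.Φ (i:Λ)‖ * ‖y n‖ := (F.Φ i).le_opNorm _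
          _ ≤ (t.sup fun l => ‖F.Φ l‖₊ : NNReal) * M := by
              apply mul_le_mul _ (hyM n) (norm_nonneg _) (NNReal.coe_nonneg _)
              exact_mod_cast Finset.le_sup (f := fun l => ‖F.Φ l‖₊) i.2
    rw [Metric.totallyBounded_iff] at hPtb
    obtain ⟨t', ht'fin, ht'cov⟩ := hPtb η' hη'
    -- key quantitative estimate
    have hkey : ∀ a b : ℕ, N ≤ a → N ≤ b → ‖P a - P b‖ < 2 * η' →
        ‖F.coeff (y a) - F.coeff (y b)‖ < ε' := by
      intro a b ha hb hab
      have hdecomp : F.coeff (y a) - F.coeff (y b) =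
          (F.restrict S (y a) - F.restrict S (y b)) +
          (F.restrict Sᶜ (y a) - F.restrict Sᶜ (y b)) := by
        rw [coeff_decomp F S (y a), coeff_decomp F S (y b)]; abel
      have hres : ‖F.restrict S (y a) - F.restrict S (y b)‖ ≤ (2 * η' + 2 * (θ * M)) * ‖eS‖ := by
        apply restrict_sup_bound F S eS heS _ (by positivity)
        intro l hl
        obtain ⟨l₀, hl₀t, hl₀⟩ : ∃ l₀ ∈ t, l ∈ U l₀ := by
          have := hsub hl
          simpa using this
        have h1 : ‖F.Φ l (y a) - F.Φ l₀ (y a)‖ ≤ θ * M := by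
          calc ‖F.Φ l (y a) - F.Φ l₀ (y a)‖ = ‖(F.Φ l - F.Φ l₀) (y a)‖ := by simp
            _ ≤ ‖F.Φ l - F.Φ l₀‖ * ‖y a‖ := (F.Φ l - F.Φ l₀).le_opNorm _
            _ ≤ θ * M := mul_le_mul hl₀.le (hyM a) (norm_nonneg _) hθ.le
        have h2 : ‖F.Φ l (y b) - F.Φ l₀ (y b)‖ ≤ θ * M := by
          calc ‖F.Φ l (y b) - F.Φ l₀ (y b)‖ = ‖(F.Φ l - F.Φ l₀) (y b)‖ := by simp
            _ ≤ ‖F.Φ l - F.Φ l₀‖ * ‖y b‖ := (F.Φ l - F.Φ l₀).le_opNorm _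
            _ ≤ θ * M := mul_le_mul hl₀.le (hyM b) (norm_nonneg _) hθ.le
        have h3 : ‖F.Φ l₀ (y a) - F.Φ l₀ (y b)‖ < 2 * η' := by
          have := norm_le_pi_norm (P a - P b) ⟨l₀, hl₀t⟩
          simp only [Pi.sub_apply, hP] at this
          exact lt_of_le_of_lt this hab
        calc ‖F.Φ l (y a) - F.Φ l (y b)‖
            = ‖(F.Φ l (y a) - F.Φ l₀ (y a)) + (F.Φ l₀ (y a) - F.Φ l₀ (y b))
              + (F.Φ l₀ (y b) - F.Φ l (y b))‖ := by ring_nf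
          _ ≤ ‖F.Φ l (y a) - F.Φ l₀ (y a)‖ + ‖F.Φ l₀ (y a) - F.Φ l₀ (y b)‖
              + ‖F.Φ l₀ (y b) - F.Φ l (y b)‖ := norm_add₃_le
          _ ≤ θ * M + (2 * η') + θ * M := by
              rw [norm_sub_rev (F.Φ l₀ (y b))]
              exact add_le_add (add_le_add h1 h3.le) h2
          _ = 2 * η' + 2 * (θ * M) := by ring
      have hθM : 2 * (θ * M) ≤ η' := by
        have h : θ * (2 * M + 2) = η' := by
          rw [hθdef]; field_simp
        have h2 : 2 * (θ * M) + 2 * θ = η' := by rw [← h]; ring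
        linarith [hθ.le]
      have hresS : ‖F.restrict S (y a) - F.restrict S (y b)‖ ≤ 3 * η' * (‖eS‖ + 1) := by
        refine hres.trans ?_
        have h1 : (2 * η' + 2 * (θ * M)) ≤ 3 * η' := by linarith
        have h2 : ‖eS‖ ≤ ‖eS‖ + 1 := by linarith
        nlinarith [norm_nonneg eS, hη'.le]
      have hη'val : 3 * η' * (‖eS‖ + 1) = 3 * ε' / 8 := by
        rw [hη'def]; field_simp
      calc ‖F.coeff (y a) - F.coeff (y b)‖
          ≤ ‖F.restrict S (y a) - F.restrict S (y b)‖ +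
            (‖F.restrict Sᶜ (y a)‖ + ‖F.restrict Sᶜ (y b)‖) := by
            rw [hdecomp]
            refine (norm_add_le _ _).trans (add_le_add le_rfl ?_)
            exact norm_sub_le _ _
        _ < 3 * ε' / 8 + (2 * η + 2 * η) := by
            apply add_lt_add_of_le_of_lt (by rw [← hη'val]; exact hresS)
            exact add_lt_add (htaily a ha) (htaily b hb)
        _ ≤ ε' := by rw [hηdef]; linarith
    -- build the finite set of centers
    classical
    set center : (↥t → K) → E := fun c =>
      if h : ∃ m, N ≤ m ∧ P m ∈ Metric.ball c η' then F.coeff (y h.choose) else 0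
      with hcenter
    refine ⟨((fun n => F.coeff (y n)) '' (Set.Iio N)) ∪ (center '' t'),
      ((Set.finite_Iio N).image _).union (ht'fin.image _), ?_⟩
    rintro _ ⟨n, rfl⟩
    by_cases hn : n < N
    · exact Set.mem_biUnion (Set.mem_union_left _ (Set.mem_image_of_mem _ hn))
        (Metric.mem_ball_self hε')
    · push_neg at hn
      obtain ⟨c, hct', hPc⟩ : ∃ c ∈ t', P n ∈ Metric.ball c η' := by
        have := ht'cov (Set.mem_range_self n)
        simpa using this
      have hex : ∃ m, N ≤ m ∧ P m ∈ Metric.ball c η' := ⟨n, hn, hPc⟩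
      obtain ⟨hmN, hPm⟩ := hex.choose_spec
      have hcc : center c = F.coeff (y hex.choose) := dif_pos hex
      refine Set.mem_biUnion (Set.mem_union_right _ (Set.mem_image_of_mem _ hct')) ?_
      rw [Metric.mem_ball, hcc, dist_eq_norm]
      apply hkey n hex.choose hn hmN
      calc ‖P n - P hex.choose‖ = dist (P n) (P hex.choose) := (dist_eq_norm _ _).symm
        _ ≤ dist (P n) c + dist c (P hex.choose) := dist_triangle _ _ _
        _ < η' + η' := add_lt_add hPc (by rwa [dist_comm])
        _ = 2 * η' := by ring
  -- extract a convergent subsequence of coefficients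
  have hcomp : IsCompact (closure (Set.range fun n => F.coeff (y n))) :=
    htb.closure.isCompact_of_isClosed isClosed_closure
  obtain ⟨w, -, φ, hφ, hconv⟩ := hcomp.tendsto_subseq
    (x := fun n => F.coeff (y n)) (fun n => subset_closure (Set.mem_range_self n))
  set z : B := F.recon w with hz
  have hyz : Filter.Tendsto (fun k => y (φ k)) Filter.atTop (nhds z) := by
    have h1 : Filter.Tendsto (fun k => F.recon (F.coeff (y (φ k)))) Filter.atTop (nhds z) :=
      (F.recon_cont.tendsto w).comp hconv
    refine h1.congr fun k => ?_
    rw [F.recon_left]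
  -- the limit has the same measurements in modulus as x
  have habs : ∀ l, ‖F.Φ l z‖ = ‖F.Φ l x‖ := by
    intro l
    obtain ⟨c, hc, hcb⟩ := eval_bound adm l
    have h1 : Filter.Tendsto (fun n => ‖F.Φ l (y n)‖) Filter.atTop (nhds ‖F.Φ l x‖) := by
      rw [tendsto_iff_dist_tendsto_zero]
      apply squeeze_zero (fun n => dist_nonneg) (g := fun n => c * ‖d n‖)
      · intro n
        rw [Real.dist_eq, ← abs_diff_eval F x (y n) l]
        exact hcb (d n)
      · simpa using hdlim.const_mul c
    have h2 : Filter.Tendsto (fun k => ‖F.Φ l (y (φ k))‖) Filter.atTop (nhds ‖F.Φ l z‖) :=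
      ((F.Φ l).continuous.norm.tendsto z).comp hyz
    exact tendsto_nhds_unique h2 (h1.comp hφ.tendsto_atTop)
  obtain ⟨τ, hτ, hzτ⟩ := hinj z x habs
  -- contradiction
  obtain ⟨k₀, hk⟩ := Metric.tendsto_atTop.mp hyz ε hε
  have hlt : dist (y (φ k₀)) z < ε := hk k₀ le_rfl
  have hge : ε ≤ phaseDist K (y (φ k₀)) x := hy2 _
  have hle : phaseDist K (y (φ k₀)) x ≤ ‖y (φ k₀) - τ • x‖ := phaseDist_le _ _ τ hτ
  rw [← hzτ, ← dist_eq_norm] at hle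
  linarith
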